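/- If a CP semigroup φ on B(K) is pure and has no normal invariant state, then its minimal dilation α to an E₀-semigroup on B(H) (with K ⊆ H, P the projection onto K, φ_t(PXP) compressing α, and α_t(P) ↑ 1) has no normal invariant state. -/

import Mathlib

open MeasureTheory Complex Filter
open scoped ComplexOrder

noncomputable section

/-- The symplectic form `ω((x,y),(x',y')) = (x'y − xy')/2` on `ℝ²`. -/
def symp (z w : ℝ × ℝ) : ℝ := (w.1 * z.2 - z.1 * w.2) / 2

variable (H : Type) [NormedAddCommGroup H] [InnerProductSpace ℂ H] [CompleteSpace H]

/-- A Weyl system: a strongly continuous family of unitaries satisfying the Weyl relation. -/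
structure WeylSystem where
  W : ℝ × ℝ → H →L[ℂ] H
  unitary_mem : ∀ z, W z ∈ unitary (H →L[ℂ] H)
  strong_cont : ∀ f : H, Continuous fun z => W z f
  weyl : ∀ z₁ z₂, W z₁ * W z₂ = Complex.exp (Complex.I * (symp z₁ z₂ : ℂ)) • W (z₁ + z₂)

variable {H}

/-- Irreducibility: any operator commuting with all the `W z` is a scalar. -/
def WeylSystem.Irreducible (S : WeylSystem H) : Prop :=
  ∀ T : H →L[ℂ] H, (∀ z, T * S.W z = S.W z * T) → ∃ c : ℂ, T = c • (1 : H →L[ℂ] H)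

/-- Conjugation `A ↦ W_{ζ/√2} A W_{ζ/√2}*`. -/
def WeylSystem.conj (S : WeylSystem H) (ζ : ℝ × ℝ) (A : H →L[ℂ] H) : H →L[ℂ] H :=
  S.W ((Real.sqrt 2)⁻¹ • ζ) * A * star (S.W ((Real.sqrt 2)⁻¹ • ζ))

/-- Normal (weak-* continuous) linear functionals on `B(H)`. -/
def IsNormalFunctional (ρ : (H →L[ℂ] H) → ℂ) : Prop :=
  ∃ ξ η : ℕ → H, Summable (fun n => ‖ξ n‖ * ‖η n‖) ∧
    ∀ A : H →L[ℂ] H, ρ A = ∑' n, @inner ℂ _ _ (A (ξ n)) (η n)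

/-- Normal states on `B(H)`. -/
def IsNormalState (ρ : (H →L[ℂ] H) → ℂ) : Prop :=
  IsNormalFunctional ρ ∧ (∀ A : H →L[ℂ] H, 0 ≤ ρ (star A * A)) ∧ ρ 1 = 1

/-- The norm of a (bounded) linear functional on `B(H)`. -/
def funcNorm (ρ : (H →L[ℂ] H) → ℂ) : ℝ :=
  ⨆ A : {A : H →L[ℂ] H // ‖A‖ ≤ 1}, ‖ρ A.1‖

/-- The Gaussian probability measure `μ_t` on `ℝ²`, with density `(πt)⁻¹ e^{−(x²+y²)/(4t)}`,
whose symplectic Fourier transform is `e^{−t|z|²}`. -/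
def gaussMeasure (t : ℝ) : Measure (ℝ × ℝ) :=
  volume.withDensity fun p => ENNReal.ofReal ((Real.pi * t)⁻¹ * Real.exp (-(p.1 ^ 2 + p.2 ^ 2) / (4 * t)))

/-- `Φ` is the CCR heat flow semigroup: `Φ 0` is the identity and for `t > 0`, `Φ t` is given by
the weak integral `Φ t A = ∫ W_{ζ/√2} A W_{ζ/√2}* dμ_t(ζ)` against the Gaussian measure. -/
def IsHeatFlow (S : WeylSystem H) (Φ : ℝ → (H →L[ℂ] H) → (H →L[ℂ] H)) : Prop :=
  Φ 0 = id ∧ ∀ t > 0, ∀ (A : H →L[ℂ] H) (ξ η : H),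
    @inner ℂ _ _ ((Φ t A) ξ) η = ∫ ζ, @inner ℂ _ _ ((S.conj ζ A) ξ) η ∂(gaussMeasure t)


/-- An `E₀`-semigroup on `B(H)`: a pointwise weak-continuous semigroup of unital normal
`*`-endomorphisms of `B(H)` (normality expressed by preservation of normal functionals under
precomposition). -/
structure E0Semigroup (H : Type) [NormedAddCommGroup H] [InnerProductSpace ℂ H]
    [CompleteSpace H] where
  α : ℝ → (H →L[ℂ] H) → (H →L[ℂ] H)
  map_add : ∀ t, 0 ≤ t → ∀ A B : H →L[ℂ] H, α t (A + B) = α t A + α t B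
  map_smul : ∀ t, 0 ≤ t → ∀ (c : ℂ) (A : H →L[ℂ] H), α t (c • A) = c • α t A
  map_mul : ∀ t, 0 ≤ t → ∀ A B : H →L[ℂ] H, α t (A * B) = α t A * α t B
  map_star : ∀ t, 0 ≤ t → ∀ A : H →L[ℂ] H, α t (star A) = star (α t A)
  map_one : ∀ t, 0 ≤ t → α t 1 = 1
  normal : ∀ t, 0 ≤ t → ∀ ρ : (H →L[ℂ] H) → ℂ, IsNormalFunctional ρ →
    IsNormalFunctional (fun A => ρ (α t A))
  semigroup : ∀ s t, 0 ≤ s → 0 ≤ t → ∀ A : H →L[ℂ] H, α s (α t A) = α (s + t) A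
  map_zero : α 0 = id
  weak_cont : ∀ (A : H →L[ℂ] H) (ξ η : H), Continuous fun t : ℝ => @inner ℂ _ _ ((α t A) ξ) η

open scoped InnerProductSpace

section Aux
variable {H : Type} [NormedAddCommGroup H] [InnerProductSpace ℂ H] [CompleteSpace H]

lemma aux_summable (ξ η : ℕ → H) (h : Summable fun n => ‖ξ n‖ * ‖η n‖) (A : H →L[ℂ] H) :
    Summable fun n => (⟪A (ξ n), η n⟫_ℂ) := by
  apply Summable.of_norm
  apply Summable.of_nonneg_of_le (fun n => norm_nonneg _) (fun n => ?_) (h.mul_left ‖A‖)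
  calc ‖⟪A (ξ n), η n⟫_ℂ‖ ≤ ‖A (ξ n)‖ * ‖η n‖ := norm_inner_le_norm _ _
    _ ≤ (‖A‖ * ‖ξ n‖) * ‖η n‖ := by
        exact mul_le_mul_of_nonneg_right (A.le_opNorm _) (norm_nonneg _)
    _ = ‖A‖ * (‖ξ n‖ * ‖η n‖) := by ring

lemma aux_add {ω : (H →L[ℂ] H) → ℂ} (hω : IsNormalFunctional ω) (A B : H →L[ℂ] H) :
    ω (A + B) = ω A + ω B := by
  obtain ⟨ξ, η, hsum, hrep⟩ := hω
  rw [hrep, hrep, hrep, ← Summable.tsum_add (aux_summable ξ η hsum A) (aux_summable ξ η hsum B)]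
  simp [inner_add_left]

lemma aux_smul {ω : (H →L[ℂ] H) → ℂ} (hω : IsNormalFunctional ω) (c : ℂ) (A : H →L[ℂ] H) :
    ω (c • A) = (starRingEnd ℂ) c * ω A := by
  obtain ⟨ξ, η, hsum, hrep⟩ := hω
  rw [hrep, hrep, ← tsum_mul_left]
  simp [inner_smul_left, mul_comm]

lemma aux_quad (a b : ℝ) (hb : 0 ≤ b) (h : ∀ t : ℝ, 0 ≤ 2 * t * a + t ^ 2 * b) : a = 0 := by
  by_contra ha
  have h1 := h (-a / (b + 1))
  have hb1 : (0:ℝ) < b + 1 := by linarith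
  have ha2 : 0 < a ^ 2 := by positivity
  have hne : b + 1 ≠ 0 := ne_of_gt hb1
  field_simp at h1
  nlinarith [mul_pos ha2 hb1, sq_nonneg (b+1), mul_nonneg ha2.le hb]

end Aux

section Aux2
variable {H : Type} [NormedAddCommGroup H] [InnerProductSpace ℂ H] [CompleteSpace H]

lemma aux_expand (Q A : H →L[ℂ] H) (c : ℂ) :
    star (Q + c • A) * (Q + c • A) =
      star Q * Q + c • (star Q * A) + (starRingEnd ℂ c) • (star A * Q)
        + ((starRingEnd ℂ c) * c) • (star A * A) := by
  simp only [star_add, star_smul, add_mul, mul_add, smul_mul_assoc, mul_smul_comm, smul_smul,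
    smul_add, RCLike.star_def, mul_comm]
  abel

lemma aux_pos_re_im {ω : (H →L[ℂ] H) → ℂ} (hpos : ∀ A : H →L[ℂ] H, 0 ≤ ω (star A * A))
    (A : H →L[ℂ] H) : 0 ≤ (ω (star A * A)).re ∧ (ω (star A * A)).im = 0 := by
  have h := hpos A
  rw [Complex.le_def] at h
  exact ⟨by simpa using h.1, by simpa using h.2.symm⟩

lemma aux_herm {ω : (H →L[ℂ] H) → ℂ} (hω : IsNormalFunctional ω)
    (hpos : ∀ A : H →L[ℂ] H, 0 ≤ ω (star A * A)) (X : H →L[ℂ] H) :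
    ω (star X) = (starRingEnd ℂ) (ω X) := by
  have h1 : (ω 1).im = 0 := by
    have := (aux_pos_re_im hpos 1).2
    simpa using this
  have hx : (ω (star X * X)).im = 0 := (aux_pos_re_im hpos X).2
  have e1 : (ω (star (1 + (1:ℂ) • X) * (1 + (1:ℂ) • X))).im = 0 :=
    (aux_pos_re_im hpos _).2
  have e2 : (ω (star (1 + Complex.I • X) * (1 + Complex.I • X))).im = 0 :=
    (aux_pos_re_im hpos _).2
  rw [aux_expand, aux_add hω, aux_add hω, aux_add hω, aux_smul hω, aux_smul hω, aux_smul hω]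
    at e1 e2
  simp only [map_one, one_smul, one_mul, mul_one, star_one, Complex.conj_conj, Complex.conj_I,
    map_mul, map_neg, neg_mul, neg_neg, Complex.I_mul_I, one_smul] at e1 e2
  -- e1 : (ω 1 + 1 * ω X + 1 * ω (star X) + 1 * ω (star X * X)).im = 0 (roughly)
  simp only [Complex.add_im, Complex.mul_im, Complex.mul_re, Complex.one_re, Complex.one_im,
    Complex.I_re, Complex.I_im, Complex.neg_re, Complex.neg_im, h1, hx,
    (aux_pos_re_im hpos X).2] at e1 e2
  apply Complex.ext
  · simp only [Complex.conj_re]; linarith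
  · simp only [Complex.conj_im]; linarith

lemma aux_zero {ω : (H →L[ℂ] H) → ℂ} (hω : IsNormalFunctional ω)
    (hpos : ∀ A : H →L[ℂ] H, 0 ≤ ω (star A * A)) (Q : H →L[ℂ] H)
    (hQ : ω (star Q * Q) = 0) (A : H →L[ℂ] H) : ω (star Q * A) = 0 := by
  set z := ω (star Q * A) with hz
  set w := (ω (star A * A)).re with hw
  have hconj : ω (star A * Q) = (starRingEnd ℂ) z := by
    have h : star A * Q = star (star Q * A) := by simp [star_mul]
    rw [h, aux_herm hω hpos]
  have key : ∀ c : ℂ, 0 ≤ ((starRingEnd ℂ c) * z + c * (starRingEnd ℂ) z).re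
      + ((starRingEnd ℂ c) * c).re * w := by
    intro c
    have h := hpos (Q + c • A)
    rw [aux_expand, aux_add hω, aux_add hω, aux_add hω, aux_smul hω, aux_smul hω, aux_smul hω,
      hQ, hconj, Complex.le_def] at h
    have h2 := aux_pos_re_im hpos A
    have him : ((starRingEnd ℂ c) * c).im = 0 := by
      simp [Complex.mul_im, Complex.conj_re, Complex.conj_im]; ring
    have := h.1
    simp only [Complex.zero_re, Complex.add_re, Complex.mul_re, Complex.mul_im, zero_add,
      Complex.conj_re, Complex.conj_im, map_mul, Complex.conj_conj] at this ⊢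
    rw [h2.2] at this
    nlinarith [this]
  have hwre : 0 ≤ w := (aux_pos_re_im hpos A).1
  have hre : z.re = 0 := by
    apply aux_quad z.re w hwre
    intro t
    have h := key (t : ℂ)
    have e : (((starRingEnd ℂ) (t:ℂ)) * z + (t:ℂ) * (starRingEnd ℂ) z).re
        + (((starRingEnd ℂ) (t:ℂ)) * (t:ℂ)).re * w = 2 * t * z.re + t ^ 2 * w := by
      simp [Complex.add_re, Complex.mul_re, Complex.conj_ofReal, Complex.conj_re,
        Complex.conj_im]
      ring
    linarith [e ▸ h]
  have him : z.im = 0 := by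
    apply aux_quad z.im w hwre
    intro t
    have h := key ((t : ℂ) * Complex.I)
    have e : (((starRingEnd ℂ) ((t:ℂ) * Complex.I)) * z
        + ((t:ℂ) * Complex.I) * (starRingEnd ℂ) z).re
        + (((starRingEnd ℂ) ((t:ℂ) * Complex.I)) * ((t:ℂ) * Complex.I)).re * w
        = 2 * t * z.im + t ^ 2 * w := by
      simp [Complex.add_re, Complex.mul_re, Complex.mul_im, Complex.conj_ofReal,
        Complex.conj_re, Complex.conj_im, Complex.I_re, Complex.I_im]
      ring
    linarith [e ▸ h]
  exact Complex.ext hre him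

lemma aux_proj_norm (Q : H →L[ℂ] H) (hQ : Q * Q = Q) (hQsa : star Q = Q) (ξ : H) :
    ‖Q ξ‖ ≤ ‖ξ‖ := by
  have hadj : ContinuousLinearMap.adjoint Q = Q := by
    rw [← ContinuousLinearMap.star_eq_adjoint, hQsa]
  have h1 : ⟪Q ξ, Q ξ⟫_ℂ = ⟪ξ, Q ξ⟫_ℂ := by
    calc ⟪Q ξ, Q ξ⟫_ℂ = ⟪(ContinuousLinearMap.adjoint Q) ξ, Q ξ⟫_ℂ := by rw [hadj]
      _ = ⟪ξ, Q (Q ξ)⟫_ℂ := ContinuousLinearMap.adjoint_inner_left Q (Q ξ) ξ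
      _ = ⟪ξ, Q ξ⟫_ℂ := by rw [← ContinuousLinearMap.mul_apply, hQ]
  have h2 : ‖Q ξ‖ * ‖Q ξ‖ ≤ ‖ξ‖ * ‖Q ξ‖ := by
    have h3 := norm_inner_le_norm (𝕜 := ℂ) ξ (Q ξ)
    rw [← h1] at h3
    calc ‖Q ξ‖ * ‖Q ξ‖ = ‖⟪Q ξ, Q ξ⟫_ℂ‖ := by
          rw [inner_self_eq_norm_sq_to_K (𝕜 := ℂ)]
          simp [sq, Complex.norm_real]
      _ ≤ ‖ξ‖ * ‖Q ξ‖ := h3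
  rcases eq_or_lt_of_le (norm_nonneg (Q ξ)) with h | h
  · rw [← h]; exact norm_nonneg ξ
  · exact le_of_mul_le_mul_right h2 h

end Aux2

/-- If a CP semigroup `φ` on `B(K)` is pure and has no normal invariant state,
then its minimal dilation `α` to an `E₀`-semigroup on `B(H)` has no normal invariant state.
Here `K` is the range of a projection `P`, `φ_t(A) = P α_t(A) P` on the corner
`B(K) = P B(H) P`, normal states of `B(K)` are identified with normal states `ρ` of `B(H)`
with `ρ(P) = 1`, and minimality gives `α_t(P) ↑ 1` strongly. -/
theorem minimal_dilation_no_normal_invariant_state [TopologicalSpace.SeparableSpace H]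
    (α : E0Semigroup H) (P : H →L[ℂ] H) (hP : IsIdempotentElem P) (hPsa : star P = P)
    (hmin : ∀ ξ : H, Tendsto (fun t : ℝ => (α.α t P) ξ) atTop (nhds ξ))
    (hpure : ∀ ρ₁ ρ₂ : (H →L[ℂ] H) → ℂ, IsNormalState ρ₁ → IsNormalState ρ₂ →
      ρ₁ P = 1 → ρ₂ P = 1 →
      Tendsto (fun t : ℝ => funcNorm (fun A =>
        ρ₁ (P * α.α t (P * A * P) * P) - ρ₂ (P * α.α t (P * A * P) * P))) atTop (nhds 0))
    (hnoinv : ¬ ∃ ρ : (H →L[ℂ] H) → ℂ, IsNormalState ρ ∧ ρ P = 1 ∧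
      ∀ t : ℝ, 0 ≤ t → ∀ A : H →L[ℂ] H, ρ (P * α.α t (P * A * P) * P) = ρ (P * A * P)) :
    ¬ ∃ ω : (H →L[ℂ] H) → ℂ, IsNormalState ω ∧
      ∀ t : ℝ, 0 ≤ t → ∀ A : H →L[ℂ] H, ω (α.α t A) = ω A := by
  rintro ⟨ω, hω, hinv⟩
  obtain ⟨hnf, hpos, hone⟩ := hω
  apply hnoinv
  have hPapply : ω P = 1 := by
    obtain ⟨ξ, η, hsum, hrep⟩ := hnf
    have hQn : ∀ n : ℕ, ∀ v : H, ‖(α.α n P) v‖ ≤ ‖v‖ := by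
      intro n v
      apply aux_proj_norm
      · rw [← α.map_mul n (Nat.cast_nonneg n) P P, hP.eq]
      · rw [← α.map_star n (Nat.cast_nonneg n) P, hPsa]
    have hconv : Tendsto (fun n : ℕ => ω (α.α n P)) atTop (nhds (ω 1)) := by
      have hrw : (fun n : ℕ => ω (α.α n P))
          = fun n : ℕ => ∑' k, ⟪(α.α (n : ℝ) P) (ξ k), η k⟫_ℂ := funext fun n => hrep _
      rw [hrw, hrep 1]
      simp only [ContinuousLinearMap.one_apply]
      exact tendsto_tsum_of_dominated_convergence hsum
        (fun k => ((hmin (ξ k)).comp tendsto_natCast_atTop_atTop).inner tendsto_const_nhds)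
        (Filter.Eventually.of_forall fun n k =>
          le_trans (norm_inner_le_norm _ _)
            (mul_le_mul_of_nonneg_right (hQn n (ξ k)) (norm_nonneg _)))
    have hconst : (fun n : ℕ => ω (α.α n P)) = fun _ => ω P :=
      funext fun n => hinv n (Nat.cast_nonneg n) P
    rw [hconst] at hconv
    rw [← hone, tendsto_nhds_unique tendsto_const_nhds hconv]
  have hstar1P : star ((1 : H →L[ℂ] H) - P) = 1 - P := by rw [star_sub, star_one, hPsa]
  have hzero : ∀ A : H →L[ℂ] H, ω ((1 - P) * A) = 0 := by
    have hQQ : star ((1 : H →L[ℂ] H) - P) * (1 - P) = (1 - P) := by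
      rw [hstar1P, sub_mul, one_mul, mul_sub, mul_one, hP.eq, sub_self, sub_zero]
    have hωQ : ω (star ((1 : H →L[ℂ] H) - P) * (1 - P)) = 0 := by
      rw [hQQ]
      have h1 : (1 : H →L[ℂ] H) - P = 1 + (-1 : ℂ) • P := by
        simp [neg_smul, sub_eq_add_neg]
      rw [h1, aux_add hnf, aux_smul hnf]
      simp [hone, hPapply]
    intro A
    have h := aux_zero hnf hpos (1 - P) hωQ A
    rwa [hstar1P] at h
  have corner : ∀ B : H →L[ℂ] H, ω (P * B * P) = ω B := by
    intro B
    have h1 : ω B = ω (P * B) := by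
      have hsplit : B = (1 - P) * B + P * B := by
        rw [sub_mul, one_mul]; abel
      conv_lhs => rw [hsplit]
      rw [aux_add hnf, hzero B, zero_add]
    have h3 : ω (P * B * (1 - P)) = 0 := by
      have hh := aux_herm hnf hpos (star (P * B * (1 - P)))
      rw [star_star] at hh
      rw [hh]
      have hs : star (P * B * (1 - P)) = (1 - P) * (star B * P) := by
        simp [star_mul, hPsa, hstar1P, mul_assoc]
      rw [hs, hzero]
      simp
    have h2 : ω (P * B * P) = ω (P * B) := by
      have hsplit : P * B = P * B * P + P * B * (1 - P) := by
        rw [mul_sub, mul_one]; abel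
      conv_rhs => rw [hsplit]
      rw [aux_add hnf, h3, add_zero]
    rw [h2, ← h1]
  exact ⟨ω, ⟨hnf, hpos, hone⟩, hPapply, fun t ht A => by
    rw [corner (α.α t (P * A * P)), hinv t ht]⟩
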